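/- Assume the Steklov eigenfunctions on each patch satisfy the interior decay bound ‖ψ_k‖_{L²(N^{⌊ℓ/2⌋}(T))} ≤ C_sd(H,ℓ) exp(−C k^{1/(d-1)}) and the number of elements in each patch of order ℓ scales like ℓ^d. Then the localization quantity satisfies σ(H,ℓ) ≤ C′ C_sd(H,ℓ) ℓ^{d − d/(d-1)} H_min^{−1/2} exp(−C ℓ^{d/(d-1)}), i.e., the localization error decays super-exponentially in ℓ. -/

import Mathlib

lemma aux_summable {a α : ℝ} (ha : 0 < a) (hα : 0 < α) :
    Summable (fun k : ℕ => Real.exp (-a * (k : ℝ) ^ α)) := by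
  rw [← summable_nat_add_iff 1]
  set q : ℕ := ⌈2 / α⌉₊ + 1 with hq
  have hαq : 2 ≤ α * q := by
    have h2 : 2 / α ≤ (q : ℝ) := le_trans (Nat.le_ceil _) (by rw [hq]; push_cast; linarith)
    calc (2:ℝ) = α * (2 / α) := by field_simp
    _ ≤ α * q := by nlinarith
  have hqpos : (0:ℝ) < q := by positivity
  refine Summable.of_nonneg_of_le (f := fun n => ((q:ℝ)/a)^q * ((n + 1 : ℕ) : ℝ) ^ (-(2:ℝ)))
    (fun n => (Real.exp_pos _).le) ?_ ?_
  · intro n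
    set x : ℝ := ((n + 1 : ℕ) : ℝ) with hx
    have hx1 : (1:ℝ) ≤ x := by rw [hx]; exact_mod_cast Nat.one_le_iff_ne_zero.mpr (Nat.succ_ne_zero n)
    have hx0 : (0:ℝ) < x := by linarith
    have hxα : (0:ℝ) < x ^ α := Real.rpow_pos_of_pos hx0 α
    -- exp (a x^α) ≥ (a x^α / q)^q
    have h1 : (a * x ^ α / q) ^ q ≤ Real.exp (a * x ^ α) := by
      have he : Real.exp (a * x ^ α) = (Real.exp (a * x ^ α / q)) ^ q := by
        rw [← Real.exp_nat_mul]; congr 1; field_simp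
      rw [he]
      apply pow_le_pow_left₀ (by positivity)
      linarith [Real.add_one_le_exp (a * x ^ α / q)]
    -- (a x^α / q)^q ≥ (a/q)^q * x^2
    have h2 : (a / q) ^ q * x ^ (2:ℝ) ≤ (a * x ^ α / q) ^ q := by
      have : (a * x ^ α / q) ^ q = (a / q) ^ q * x ^ (α * q) := by
        rw [mul_comm a (x ^ α), mul_div_assoc, mul_pow, ← Real.rpow_natCast (x ^ α) q,
          ← Real.rpow_mul hx0.le, mul_comm]
      rw [this]
      have := Real.rpow_le_rpow_of_exponent_le hx1 hαq
      have hc : (0:ℝ) ≤ (a / q) ^ q := by positivity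
      nlinarith [this, hc]
    have h3 : Real.exp (-a * x ^ α) ≤ ((a / q) ^ q * x ^ (2:ℝ))⁻¹ := by
      rw [neg_mul, Real.exp_neg]
      apply inv_anti₀ (by positivity) (le_trans h2 h1)
    refine h3.trans (le_of_eq ?_)
    show ((a / (q:ℝ)) ^ q * x ^ (2:ℝ))⁻¹ = ((q:ℝ) / a) ^ q * x ^ (-(2:ℝ))
    rw [Real.rpow_neg hx0.le, mul_inv, ← inv_pow, inv_div]
  · exact Summable.mul_left _ <| (summable_nat_add_iff 1).mpr <|
      Real.summable_nat_rpow.mpr (by norm_num)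

set_option maxHeartbeats 1000000 in

/-- super-exponential localization: assume the Steklov eigenfunctions
`ψ_k` on each patch `ω = N^ℓ(T)` decay in the interior like
`‖ψ_k‖_{L²(N^{⌊ℓ/2⌋}(T))} ≤ C_sd exp(−C_dec k^{1/(d-1)})`, that the number `N` of
elements in the (inner) patch scales like `ℓ^d` (i.e. `c₀ℓ^d ≤ N ≤ c₁ℓ^d`), and that a
trace inequality `‖v‖_{L²(Γ₁)} ≤ C_tr H_min^{-1/2}‖v‖_{H¹(ω)}` holds on the harmonic
space `Y`.  Then there are constants `C, C' > 0` independent of `H, ℓ` (and of the patch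
data) such that the localization quantity satisfies
`σ ≤ C' C_sd ℓ^{d−d/(d-1)} H_min^{-1/2} exp(−C ℓ^{d/(d-1)})`, i.e. the localization
error decays super-exponentially in `ℓ`.  Here `σ` is realized as the supremum of
`(g, v)_{L²(ω̂)}` over normalized `v ∈ Y`, where `g` is a normalized piecewise constant
source `L²`-orthogonal to the first `N` Steklov eigenfunctions, and the
`L²(Γ₁)`-orthonormal Steklov system `{ψ_k}` is complete in `Y`. -/
theorem statement14
    (d : ℕ) (hd : 2 ≤ d) (Cdec c₀ c₁ Ctr : ℝ)
    (hCdec : 0 < Cdec) (hc₀ : 0 < c₀) (hc₁ : 0 < c₁) (hCtr : 0 < Ctr) :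
    ∃ C C' : ℝ, 0 < C ∧ 0 < C' ∧
      ∀ (V Hb Hw : Type)
        [NormedAddCommGroup V] [InnerProductSpace ℝ V]
        [NormedAddCommGroup Hb] [InnerProductSpace ℝ Hb]
        [NormedAddCommGroup Hw] [InnerProductSpace ℝ Hw]
        (ψ : ℕ → V) (Tb : V →L[ℝ] Hb) (Tw : V →L[ℝ] Hw)
        (Y : Submodule ℝ V) (g : Hw) (ℓ N : ℕ) (Hmin Csd : ℝ),
        0 < Hmin → 0 ≤ Csd → 1 ≤ ℓ →
        -- number of elements in the patch scales like ℓ^d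
        c₀ * (ℓ : ℝ) ^ d ≤ (N : ℝ) → (N : ℝ) ≤ c₁ * (ℓ : ℝ) ^ d →
        -- L²(Γ₁)-orthonormality of the Steklov eigenfunctions
        (∀ j k : ℕ,
          (inner ℝ (Tb (ψ j)) (Tb (ψ k)) : ℝ) = if j = k then 1 else 0) →
        -- completeness: every v ∈ Y expands in the Steklov eigenfunctions
        (∀ v ∈ Y, HasSum
          (fun k : ℕ => (inner ℝ (Tb v) (Tb (ψ k)) : ℝ) • ψ k) v) →
        -- interior decay of the Steklov eigenfunctions (Assumption on decay)
        (∀ k : ℕ, ‖Tw (ψ k)‖ ≤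
          Csd * Real.exp (-Cdec * (k : ℝ) ^ (1 / ((d : ℝ) - 1)))) →
        -- normalized source, orthogonal to the first N eigenfunctions
        ‖g‖ ≤ 1 →
        (∀ k < N, (inner ℝ g (Tw (ψ k)) : ℝ) = 0) →
        -- trace inequality
        (∀ v ∈ Y, ‖Tb v‖ ≤ Ctr * Hmin ^ (-(1 / 2 : ℝ)) * ‖v‖) →
        -- conclusion: super-exponential bound on the localization quantity σ
        ∀ v ∈ Y, ‖v‖ = 1 →
          (inner ℝ g (Tw v) : ℝ) ≤
            C' * Csd * (ℓ : ℝ) ^ ((d : ℝ) - (d : ℝ) / ((d : ℝ) - 1)) *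
              Hmin ^ (-(1 / 2 : ℝ)) *
                Real.exp (-C * (ℓ : ℝ) ^ ((d : ℝ) / ((d : ℝ) - 1))) := by
  have hd2 : (2:ℝ) ≤ (d:ℝ) := by exact_mod_cast hd
  have hd1 : (1:ℝ) ≤ (d:ℝ) - 1 := by linarith
  set α : ℝ := 1 / ((d:ℝ) - 1) with hα_def
  have hα : 0 < α := by rw [hα_def]; exact div_pos one_pos (by linarith)
  have hS_sum : Summable (fun k : ℕ => Real.exp (-(Cdec/2) * (k:ℝ) ^ α)) :=
    aux_summable (by linarith) hα
  set S : ℝ := ∑' k : ℕ, Real.exp (-(Cdec/2) * (k:ℝ) ^ α) with hS_def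
  have hS1 : (1:ℝ) ≤ S := by
    have h0 : Real.exp (-(Cdec/2) * ((0:ℕ):ℝ) ^ α) = 1 := by
      simp [Real.zero_rpow (ne_of_gt hα)]
    calc (1:ℝ) = Real.exp (-(Cdec/2) * ((0:ℕ):ℝ) ^ α) := h0.symm
    _ ≤ S := Summable.le_tsum hS_sum 0 (fun i _ => (Real.exp_pos _).le)
  clear_value S
  have hSpos : (0:ℝ) < S := lt_of_lt_of_le one_pos hS1
  have hc₀α : (0:ℝ) < c₀ ^ α := Real.rpow_pos_of_pos hc₀ α
  refine ⟨Cdec / 2 * c₀ ^ α, Ctr * S, by positivity, by positivity, ?_⟩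
  intro V Hb Hw _ _ _ _ _ _ ψ Tb Tw Y g ℓ N Hmin Csd hHmin hCsd hℓ hN₁ hN₂
    horth hcomp hdec hg hgorth htr v hv hv1
  have hHp : (0:ℝ) < Hmin ^ (-(1/2:ℝ)) := Real.rpow_pos_of_pos hHmin _
  have hTbv : ‖Tb v‖ ≤ Ctr * Hmin ^ (-(1/2:ℝ)) := by
    have := htr v hv; rwa [hv1, mul_one] at this
  have hM0 : (0:ℝ) ≤ Ctr * Hmin ^ (-(1/2:ℝ)) := by positivity
  -- series representation
  have hsum := (hcomp v hv).mapL ((innerSL ℝ g).comp Tw)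
  simp only [ContinuousLinearMap.coe_comp', Function.comp_apply, map_smul,
    innerSL_apply_apply, smul_eq_mul, real_inner_smul_right] at hsum
  -- hsum : HasSum (fun k => ⟪Tb v, Tb ψ k⟫ * ⟪g, Tw ψ k⟫) ⟪g, Tw v⟫
  set K : ℝ := Ctr * Hmin ^ (-(1/2:ℝ)) * Csd * Real.exp (-(Cdec/2) * (N:ℝ) ^ α)
    with hK_def
  clear_value K
  have hK0 : (0:ℝ) ≤ K := by
    rw [hK_def]
    exact mul_nonneg (mul_nonneg hM0 hCsd) (Real.exp_pos _).le
  have hfB : ∀ k : ℕ, (inner ℝ (Tb v) (Tb (ψ k)) : ℝ) * (inner ℝ g (Tw (ψ k)) : ℝ)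
      ≤ K * Real.exp (-(Cdec/2) * (k:ℝ) ^ α) := by
    intro k
    by_cases hk : k < N
    · rw [hgorth k hk, mul_zero]
      exact mul_nonneg hK0 (Real.exp_pos _).le
    · push_neg at hk
      have hkα : (N:ℝ) ^ α ≤ (k:ℝ) ^ α :=
        Real.rpow_le_rpow (Nat.cast_nonneg N) (by exact_mod_cast hk) hα.le
      have hexp : Real.exp (-Cdec * (k:ℝ) ^ α) ≤
          Real.exp (-(Cdec/2) * (N:ℝ) ^ α) * Real.exp (-(Cdec/2) * (k:ℝ) ^ α) := by
        rw [← Real.exp_add]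
        apply Real.exp_le_exp.mpr
        nlinarith
      have hψ1 : ‖Tb (ψ k)‖ = 1 := by
        have h1 : (inner ℝ (Tb (ψ k)) (Tb (ψ k)) : ℝ) = 1 := by simpa using horth k k
        have h2 := real_inner_self_eq_norm_mul_norm (Tb (ψ k))
        nlinarith [norm_nonneg (Tb (ψ k))]
      have hc : |(inner ℝ (Tb v) (Tb (ψ k)) : ℝ)| ≤ Ctr * Hmin ^ (-(1/2:ℝ)) := by
        calc |(inner ℝ (Tb v) (Tb (ψ k)) : ℝ)| ≤ ‖Tb v‖ * ‖Tb (ψ k)‖ :=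
              abs_real_inner_le_norm _ _
        _ = ‖Tb v‖ := by rw [hψ1, mul_one]
        _ ≤ _ := hTbv
      have hg' : |(inner ℝ g (Tw (ψ k)) : ℝ)| ≤ Csd * Real.exp (-Cdec * (k:ℝ) ^ α) := by
        calc |(inner ℝ g (Tw (ψ k)) : ℝ)| ≤ ‖g‖ * ‖Tw (ψ k)‖ := abs_real_inner_le_norm _ _
        _ ≤ 1 * (Csd * Real.exp (-Cdec * (k:ℝ) ^ α)) :=
              mul_le_mul hg (hdec k) (norm_nonneg _) zero_le_one
        _ = _ := one_mul _
      calc (inner ℝ (Tb v) (Tb (ψ k)) : ℝ) * (inner ℝ g (Tw (ψ k)) : ℝ)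
          ≤ |(inner ℝ (Tb v) (Tb (ψ k)) : ℝ) * (inner ℝ g (Tw (ψ k)) : ℝ)| := le_abs_self _
      _ = |(inner ℝ (Tb v) (Tb (ψ k)) : ℝ)| * |(inner ℝ g (Tw (ψ k)) : ℝ)| := abs_mul _ _
      _ ≤ (Ctr * Hmin ^ (-(1/2:ℝ))) * (Csd * Real.exp (-Cdec * (k:ℝ) ^ α)) :=
            mul_le_mul hc hg' (abs_nonneg _) hM0
      _ = (Ctr * Hmin ^ (-(1/2:ℝ)) * Csd) * Real.exp (-Cdec * (k:ℝ) ^ α) := by ring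
      _ ≤ (Ctr * Hmin ^ (-(1/2:ℝ)) * Csd) *
            (Real.exp (-(Cdec/2) * (N:ℝ) ^ α) * Real.exp (-(Cdec/2) * (k:ℝ) ^ α)) :=
            mul_le_mul_of_nonneg_left hexp (mul_nonneg hM0 hCsd)
      _ = K * Real.exp (-(Cdec/2) * (k:ℝ) ^ α) := by rw [hK_def]; ring
  have hB_sum : Summable (fun k : ℕ => K * Real.exp (-(Cdec/2) * (k:ℝ) ^ α)) :=
    hS_sum.mul_left K
  have hle : (inner ℝ g (Tw v) : ℝ) ≤ K * S := by
    rw [← hsum.tsum_eq]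
    calc ∑' k, (inner ℝ (Tb v) (Tb (ψ k)) : ℝ) * (inner ℝ g (Tw (ψ k)) : ℝ)
        ≤ ∑' k : ℕ, K * Real.exp (-(Cdec/2) * (k:ℝ) ^ α) :=
          Summable.tsum_le_tsum hfB hsum.summable hB_sum
    _ = K * S := by rw [hS_def, tsum_mul_left]
  -- exponent manipulations
  have hℓ1 : (1:ℝ) ≤ (ℓ:ℝ) := by exact_mod_cast hℓ
  have hNα : Cdec / 2 * c₀ ^ α * (ℓ:ℝ) ^ ((d:ℝ) / ((d:ℝ) - 1)) ≤
      Cdec / 2 * (N:ℝ) ^ α := by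
    have h2 : ((ℓ:ℝ) ^ d) ^ α = (ℓ:ℝ) ^ ((d:ℝ) / ((d:ℝ) - 1)) := by
      rw [← Real.rpow_natCast (ℓ:ℝ) d, ← Real.rpow_mul (by linarith)]
      congr 1
      rw [hα_def]; field_simp
    have h1 : c₀ ^ α * (ℓ:ℝ) ^ ((d:ℝ) / ((d:ℝ) - 1)) ≤ (N:ℝ) ^ α := by
      rw [← h2, ← Real.mul_rpow hc₀.le (by positivity)]
      exact Real.rpow_le_rpow (by positivity) hN₁ hα.le
    nlinarith
  have hβ : (1:ℝ) ≤ (ℓ:ℝ) ^ ((d:ℝ) - (d:ℝ) / ((d:ℝ) - 1)) := by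
    apply Real.one_le_rpow hℓ1
    have : (d:ℝ) / ((d:ℝ) - 1) ≤ (d:ℝ) := by
      calc (d:ℝ) / ((d:ℝ) - 1) ≤ (d:ℝ) / 1 := by
            apply div_le_div_of_nonneg_left (by linarith) one_pos hd1
      _ = (d:ℝ) := div_one _
    linarith
  have hexp2 : Real.exp (-(Cdec/2) * (N:ℝ) ^ α) ≤
      Real.exp (-(Cdec / 2 * c₀ ^ α) * (ℓ:ℝ) ^ ((d:ℝ) / ((d:ℝ) - 1))) := by
    apply Real.exp_le_exp.mpr
    nlinarith
  calc (inner ℝ g (Tw v) : ℝ) ≤ K * S := hle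
  _ = (Ctr * S * Csd * Hmin ^ (-(1/2:ℝ))) * Real.exp (-(Cdec/2) * (N:ℝ) ^ α) := by
      rw [hK_def]; ring
  _ ≤ (Ctr * S * Csd * Hmin ^ (-(1/2:ℝ))) *
        ((ℓ:ℝ) ^ ((d:ℝ) - (d:ℝ) / ((d:ℝ) - 1)) *
          Real.exp (-(Cdec / 2 * c₀ ^ α) * (ℓ:ℝ) ^ ((d:ℝ) / ((d:ℝ) - 1)))) := by
      apply mul_le_mul_of_nonneg_left _ (by positivity)
      exact hexp2.trans (le_mul_of_one_le_left (Real.exp_pos _).le hβ)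
  _ = Ctr * S * Csd * (ℓ:ℝ) ^ ((d:ℝ) - (d:ℝ) / ((d:ℝ) - 1)) * Hmin ^ (-(1/2:ℝ)) *
        Real.exp (-(Cdec / 2 * c₀ ^ α) * (ℓ:ℝ) ^ ((d:ℝ) / ((d:ℝ) - 1))) := by ring
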